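/- Let n ≥ 1 and 0 ≤ i ≤ n. If p and q are real polynomials such that 𝔅̄ₙp(x) = b_{n,i}(x) and 𝔅̄ₙq(x) = b_{n,n−i}(x) for all x ∈ [0,1], then p(x) = q(1−x) for all x ∈ [0,1]. (In the notation φ_{n,i} = 𝔅̄ₙ⁻¹b_{n,i}, this says φ_{n,i}(x) = φ_{n,n−i}(1−x).) -/

import Mathlib

open MeasureTheory Polynomial

/-- The Beta operator of Mühlbach and Lupaş on `C[0,1]`. -/
noncomputable def betaOp (n : ℕ) (f : ℝ → ℝ) (x : ℝ) : ℝ :=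
  if x = 0 then f 0
  else if x = 1 then f 1
  else (∫ t in (0:ℝ)..1, t ^ ((n:ℝ) * x - 1) * (1 - t) ^ ((n:ℝ) * (1 - x) - 1) * f t) /
       (∫ t in (0:ℝ)..1, t ^ ((n:ℝ) * x - 1) * (1 - t) ^ ((n:ℝ) * (1 - x) - 1))

/-- The Bernstein basis polynomial `b_{n,k}(x) = C(n,k) x^k (1-x)^{n-k}`. -/
noncomputable def bernsteinBasis (n k : ℕ) (x : ℝ) : ℝ :=
  (n.choose k) * x ^ k * (1 - x) ^ (n - k)

noncomputable def Ibeta (a b : ℝ) : ℝ :=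
  ∫ t in (0:ℝ)..1, t ^ (a - 1) * (1 - t) ^ (b - 1)

lemma ibeta_integrand_eq (a b : ℝ) : ∀ t ∈ Set.uIcc (0:ℝ) 1,
    ((t ^ (a - 1) * (1 - t) ^ (b - 1) : ℝ) : ℂ)
      = (t:ℂ) ^ ((a:ℂ) - 1) * (1 - (t:ℂ)) ^ ((b:ℂ) - 1) := by
  intro t ht
  rw [Set.uIcc_of_le (by norm_num)] at ht
  obtain ⟨h0, h1⟩ := ht
  rw [Complex.ofReal_mul, Complex.ofReal_cpow h0, Complex.ofReal_cpow (by linarith : (0:ℝ) ≤ 1 - t)]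
  push_cast
  ring

lemma Ibeta_eq_complex {a b : ℝ} (ha : 0 < a) (hb : 0 < b) :
    (Ibeta a b : ℂ) = Complex.betaIntegral a b := by
  rw [Ibeta, ← intervalIntegral.integral_ofReal, Complex.betaIntegral]
  exact intervalIntegral.integral_congr (fun t ht => ibeta_integrand_eq a b t ht)

lemma Ibeta_intervalIntegrable {a b : ℝ} (ha : 0 < a) (hb : 0 < b) :
    IntervalIntegrable (fun t : ℝ => t ^ (a - 1) * (1 - t) ^ (b - 1)) volume 0 1 := by
  have hc := Complex.betaIntegral_convergent (u := a) (v := b) (by simpa) (by simpa)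
  have : IntervalIntegrable
      (fun t : ℝ => ((t:ℂ) ^ ((a:ℂ) - 1) * (1 - (t:ℂ)) ^ ((b:ℂ) - 1)).re) volume 0 1 := by
    rw [intervalIntegrable_iff] at hc ⊢
    exact hc.re
  refine this.congr ?_
  intro t ht
  beta_reduce
  have ht' : t ∈ Set.uIcc (0:ℝ) 1 := Set.uIoc_subset_uIcc ht
  rw [← ibeta_integrand_eq a b t ht', Complex.ofReal_re]

lemma Ibeta_pos {a b : ℝ} (ha : 0 < a) (hb : 0 < b) : 0 < Ibeta a b := by
  refine intervalIntegral.intervalIntegral_pos_of_pos_on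
    (Ibeta_intervalIntegrable ha hb) (fun t ht => ?_) one_pos
  exact mul_pos (Real.rpow_pos_of_pos ht.1 _) (Real.rpow_pos_of_pos (by linarith [ht.2]) _)

lemma Ibeta_eq_Gamma {a b : ℝ} (ha : 0 < a) (hb : 0 < b) :
    Real.Gamma (a + b) * Ibeta a b = Real.Gamma a * Real.Gamma b := by
  have := Complex.Gamma_mul_Gamma_eq_betaIntegral (s := a) (t := b) (by simpa) (by simpa)
  rw [← Ibeta_eq_complex ha hb, ← Complex.ofReal_add, Complex.Gamma_ofReal,
    Complex.Gamma_ofReal, Complex.Gamma_ofReal, ← Complex.ofReal_mul, ← Complex.ofReal_mul]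
    at this
  exact_mod_cast this.symm

lemma Gamma_add_nat {a : ℝ} (ha : 0 < a) (k : ℕ) :
    Real.Gamma (a + k) = Real.Gamma a * ∏ j ∈ Finset.range k, (a + j) := by
  induction k with
  | zero => simp
  | succ k ih =>
    have h1 : a + (k + 1 : ℕ) = (a + k) + 1 := by push_cast; ring
    rw [h1, Real.Gamma_add_one (by positivity), ih, Finset.prod_range_succ]
    ring

lemma Ibeta_moment {a b : ℝ} (ha : 0 < a) (hb : 0 < b) (k : ℕ) :
    Ibeta (a + k) b = Ibeta a b *
      (∏ j ∈ Finset.range k, (a + j)) / (∏ j ∈ Finset.range k, (a + b + j)) := by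
  have hab : 0 < a + b := by linarith
  have hG : ∀ c : ℝ, 0 < c → Real.Gamma c ≠ 0 := fun c hc => (Real.Gamma_pos_of_pos hc).ne'
  have h1 := Ibeta_eq_Gamma (by positivity : 0 < a + (k:ℝ)) hb
  have h2 := Ibeta_eq_Gamma ha hb
  have e1 : a + (k:ℝ) + b = (a + b) + (k:ℝ) := by ring
  rw [e1, Gamma_add_nat hab k, Gamma_add_nat ha k] at h1
  have hPab : (∏ j ∈ Finset.range k, (a + b + j)) ≠ 0 := by
    refine Finset.prod_ne_zero_iff.mpr fun j _ => ?_
    positivity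
  rw [eq_div_iff hPab]
  refine mul_left_cancel₀ (hG _ hab) ?_
  linear_combination h1 - (∏ j ∈ Finset.range k, (a + (j:ℝ))) * h2

noncomputable def Ppoly (n k : ℕ) : ℝ[X] :=
  ∏ j ∈ Finset.range k, (C ((n:ℝ)/((n:ℝ)+j)) * X + C ((j:ℝ)/((n:ℝ)+j)))

lemma Ppoly_eval (n k : ℕ) (hn : 1 ≤ n) (x : ℝ) :
    (Ppoly n k).eval x = (∏ j ∈ Finset.range k, ((n:ℝ)*x + j)) /
      (∏ j ∈ Finset.range k, ((n:ℝ) + j)) := by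
  rw [Ppoly, eval_prod, ← Finset.prod_div_distrib]
  refine Finset.prod_congr rfl fun j _ => ?_
  have h : ((n:ℝ) + j) ≠ 0 := by positivity
  simp only [eval_add, eval_mul, eval_C, eval_X]
  field_simp

lemma Ppoly_factor_ne (n : ℕ) (hn : 1 ≤ n) (j : ℕ) : ((n:ℝ)/((n:ℝ)+j)) ≠ 0 := by
  have h1 : (0:ℝ) < n := by exact_mod_cast hn
  exact div_ne_zero h1.ne' (add_pos_of_pos_of_nonneg h1 (Nat.cast_nonneg j)).ne'

lemma Ppoly_natDegree (n k : ℕ) (hn : 1 ≤ n) : (Ppoly n k).natDegree = k := by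
  rw [Ppoly, natDegree_prod]
  · have e : ∀ j ∈ Finset.range k,
        (C ((n:ℝ)/((n:ℝ)+j)) * X + C ((j:ℝ)/((n:ℝ)+j))).natDegree = 1 :=
      fun j _ => natDegree_linear (Ppoly_factor_ne n hn j)
    rw [Finset.sum_congr rfl e]
    simp
  · intro j _ h
    have := natDegree_linear (b := ((j:ℝ)/((n:ℝ)+j))) (Ppoly_factor_ne n hn j)
    rw [h] at this
    simp at this

lemma Ppoly_leadingCoeff_ne_zero (n k : ℕ) (hn : 1 ≤ n) :
    (Ppoly n k).leadingCoeff ≠ 0 := by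
  rw [Ppoly, leadingCoeff_prod]
  refine Finset.prod_ne_zero_iff.mpr fun j _ => ?_
  rw [leadingCoeff_linear (Ppoly_factor_ne n hn j)]
  exact Ppoly_factor_ne n hn j

noncomputable def Tmap (n : ℕ) (p : ℝ[X]) : ℝ[X] := p.sum fun k c => C c * Ppoly n k

lemma Tmap_add (n : ℕ) (p q : ℝ[X]) : Tmap n (p + q) = Tmap n p + Tmap n q := by
  unfold Tmap
  rw [Polynomial.sum_add_index] <;> intros <;> simp [add_mul]

lemma Tmap_eq_range (n : ℕ) (p : ℝ[X]) :
    Tmap n p = ∑ k ∈ Finset.range (p.natDegree + 1), C (p.coeff k) * Ppoly n k := by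
  unfold Tmap
  exact Polynomial.sum_over_range p (by simp)

lemma Tmap_eq_zero (n : ℕ) (hn : 1 ≤ n) (p : ℝ[X]) (h : Tmap n p = 0) : p = 0 := by
  by_contra hp
  set d := p.natDegree with hd
  have hc : (Tmap n p).coeff d = p.coeff d * (Ppoly n d).leadingCoeff := by
    rw [Tmap_eq_range, finset_sum_coeff]
    rw [Finset.sum_eq_single_of_mem d (by simp [hd])]
    · rw [coeff_C_mul]
      congr 1
      rw [leadingCoeff, Ppoly_natDegree n d hn]
    · intro k hk hkd
      have hk' : k ≤ d := Nat.lt_succ_iff.mp (Finset.mem_range.mp hk)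
      have hlt : (C (p.coeff k) * Ppoly n k).natDegree < d := by
        refine lt_of_le_of_lt (natDegree_mul_le.trans ?_) (lt_of_le_of_ne hk' hkd)
        simp [Ppoly_natDegree n k hn]
      exact coeff_eq_zero_of_natDegree_lt hlt
  rw [h] at hc
  have h1 : p.coeff d ≠ 0 := by
    rw [hd]; exact mt leadingCoeff_eq_zero.mp hp
  have := Ppoly_leadingCoeff_ne_zero n d hn
  simp only [coeff_zero] at hc
  exact (mul_ne_zero h1 this) hc.symm

lemma Tmap_inj (n : ℕ) (hn : 1 ≤ n) (p q : ℝ[X]) (h : Tmap n p = Tmap n q) : p = q := by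
  have h2 : Tmap n q + Tmap n (p - q) = Tmap n q + 0 := by
    rw [← Tmap_add, add_sub_cancel, h, add_zero]
  have h3 := Tmap_eq_zero n hn _ (add_left_cancel h2)
  exact sub_eq_zero.mp h3

lemma moment_integrand_eq {a : ℝ} (ha : 0 < a) (b : ℝ) (k : ℕ) :
    ∀ t ∈ Set.uIcc (0:ℝ) 1,
      t ^ (a - 1) * (1 - t) ^ (b - 1) * t ^ k = t ^ (a + k - 1) * (1 - t) ^ (b - 1) := by
  intro t ht
  rw [Set.uIcc_of_le (by norm_num)] at ht
  rcases eq_or_lt_of_le ht.1 with h0 | h0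
  · subst h0
    rcases Nat.eq_zero_or_pos k with hk | hk
    · subst hk; norm_num
    · have h2 : a + (k:ℝ) - 1 ≠ 0 := by
        have : (1:ℝ) ≤ (k:ℝ) := by exact_mod_cast hk
        linarith
      rw [zero_pow hk.ne', Real.zero_rpow h2, mul_zero, zero_mul]
  · rw [← Real.rpow_natCast t k, mul_comm (t ^ (a-1)) _, mul_assoc, mul_comm ((1-t:ℝ) ^ (b-1)) _,
      ← Real.rpow_add h0]
    ring_nf

lemma moment_integral {a b : ℝ} (ha : 0 < a) (hb : 0 < b) (k : ℕ) :
    (∫ t in (0:ℝ)..1, t ^ (a - 1) * (1 - t) ^ (b - 1) * t ^ k) = Ibeta (a + k) b :=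
  intervalIntegral.integral_congr (fun t ht => moment_integrand_eq ha b k t ht)

lemma moment_integrable {a b : ℝ} (ha : 0 < a) (hb : 0 < b) (k : ℕ) :
    IntervalIntegrable (fun t : ℝ => t ^ (a - 1) * (1 - t) ^ (b - 1) * t ^ k) volume 0 1 := by
  refine (Ibeta_intervalIntegrable (by positivity : (0:ℝ) < a + k) hb).congr ?_
  intro t ht
  exact (moment_integrand_eq ha b k t (Set.uIoc_subset_uIcc ht)).symm

lemma betaOp_poly_eval (n : ℕ) (hn : 1 ≤ n) (p : ℝ[X]) (x : ℝ) (hx : x ∈ Set.Ioo (0:ℝ) 1) :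
    betaOp n (fun t => p.eval t) x = (Tmap n p).eval x := by
  obtain ⟨hx0, hx1⟩ := hx
  have hn' : (0:ℝ) < n := by exact_mod_cast hn
  rw [betaOp, if_neg hx0.ne', if_neg (by linarith : x ≠ 1)]
  set a := (n:ℝ) * x with ha'
  set b := (n:ℝ) * (1 - x) with hb'
  have ha : 0 < a := by positivity
  have hb : 0 < b := by
    have : (0:ℝ) < 1 - x := by linarith
    positivity
  have hab : a + b = (n:ℝ) := by rw [ha', hb']; ring
  set d := p.natDegree with hd
  have hnum : (∫ t in (0:ℝ)..1, t ^ (a - 1) * (1 - t) ^ (b - 1) * p.eval t)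
      = ∑ k ∈ Finset.range (d + 1), p.coeff k * Ibeta (a + k) b := by
    have step1 : (∫ t in (0:ℝ)..1, t ^ (a - 1) * (1 - t) ^ (b - 1) * p.eval t)
        = ∫ t in (0:ℝ)..1, ∑ k ∈ Finset.range (d + 1),
            p.coeff k * (t ^ (a - 1) * (1 - t) ^ (b - 1) * t ^ k) := by
      refine intervalIntegral.integral_congr fun t _ => ?_
      rw [eval_eq_sum_range, Finset.mul_sum]
      exact Finset.sum_congr rfl fun k _ => by ring
    rw [step1, intervalIntegral.integral_finset_sum
      (fun k _ => (moment_integrable ha hb k).const_mul _)]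
    exact Finset.sum_congr rfl fun k _ => by
      rw [intervalIntegral.integral_const_mul, moment_integral ha hb k]
  rw [hnum]
  have hden : (∫ t in (0:ℝ)..1, t ^ (a-1) * (1-t) ^ (b-1)) = Ibeta a b := rfl
  rw [hden, Tmap_eq_range, eval_finset_sum, ← hd, Finset.sum_div]
  refine Finset.sum_congr rfl fun k _ => ?_
  rw [eval_mul, eval_C, Ppoly_eval n k hn, Ibeta_moment ha hb k]
  have hprod : (∏ j ∈ Finset.range k, (a + b + (j:ℝ))) = ∏ j ∈ Finset.range k, ((n:ℝ) + j) :=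
    Finset.prod_congr rfl fun j _ => by rw [hab]
  have hIb := (Ibeta_pos ha hb).ne'
  have hPn : (∏ j ∈ Finset.range k, ((n:ℝ) + j)) ≠ 0 :=
    Finset.prod_ne_zero_iff.mpr fun j _ => by positivity
  rw [hprod, ← ha']
  clear_value a b
  field_simp

lemma betaOp_comp_one_sub (n : ℕ) (f : ℝ → ℝ) (x : ℝ) (hx : x ∈ Set.Ioo (0:ℝ) 1) :
    betaOp n (fun t => f (1 - t)) x = betaOp n f (1 - x) := by
  obtain ⟨hx0, hx1⟩ := hx
  rw [betaOp, betaOp, if_neg hx0.ne', if_neg (by linarith : x ≠ 1),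
    if_neg (by intro h; linarith : (1:ℝ) - x ≠ 0), if_neg (by intro h; linarith : (1:ℝ) - x ≠ 1)]
  have e : (n:ℝ) * (1 - (1 - x)) = (n:ℝ) * x := by ring
  rw [e]
  congr 1
  · rw [show (∫ t in (0:ℝ)..1, t ^ ((n:ℝ) * x - 1) * (1 - t) ^ ((n:ℝ) * (1 - x) - 1) * f (1 - t))
        = ∫ t in (0:ℝ)..1,
            (fun s => s ^ ((n:ℝ) * (1 - x) - 1) * (1 - s) ^ ((n:ℝ) * x - 1) * f s) (1 - t) from
      intervalIntegral.integral_congr fun t _ => by simp only [sub_sub_cancel]; ring]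
    rw [intervalIntegral.integral_comp_sub_left
      (fun s => s ^ ((n:ℝ) * (1 - x) - 1) * (1 - s) ^ ((n:ℝ) * x - 1) * f s) 1]
    norm_num
  · rw [show (∫ t in (0:ℝ)..1, t ^ ((n:ℝ) * x - 1) * (1 - t) ^ ((n:ℝ) * (1 - x) - 1))
        = ∫ t in (0:ℝ)..1,
            (fun s => s ^ ((n:ℝ) * (1 - x) - 1) * (1 - s) ^ ((n:ℝ) * x - 1)) (1 - t) from
      intervalIntegral.integral_congr fun t _ => by simp only [sub_sub_cancel]; ring]
    rw [intervalIntegral.integral_comp_sub_left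
      (fun s => s ^ ((n:ℝ) * (1 - x) - 1) * (1 - s) ^ ((n:ℝ) * x - 1)) 1]
    norm_num

/-- Symmetry of the polynomials `φ_{n,i} = 𝔅̄ₙ⁻¹ b_{n,i}`:
`φ_{n,i}(x) = φ_{n,n-i}(1-x)`. -/
theorem inv_betaOp_bernsteinBasis_symm (n : ℕ) (hn : 1 ≤ n) (i : ℕ) (hi : i ≤ n)
    (p q : Polynomial ℝ)
    (hp : ∀ x ∈ Set.Icc (0:ℝ) 1, betaOp n (fun t => p.eval t) x = bernsteinBasis n i x)
    (hq : ∀ x ∈ Set.Icc (0:ℝ) 1, betaOp n (fun t => q.eval t) x = bernsteinBasis n (n - i) x) :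
    ∀ x ∈ Set.Icc (0:ℝ) 1, p.eval x = q.eval (1 - x) := by
  set r : ℝ[X] := q.comp (1 - X) with hr'
  have hr : ∀ t : ℝ, r.eval t = q.eval (1 - t) := fun t => by
    simp [hr', eval_comp]
  have hfun : ∀ y ∈ Set.Ioo (0:ℝ) 1, (Tmap n p).eval y = (Tmap n r).eval y := by
    intro y hy
    obtain ⟨hy0, hy1⟩ := hy
    rw [← betaOp_poly_eval n hn p y ⟨hy0, hy1⟩, ← betaOp_poly_eval n hn r y ⟨hy0, hy1⟩]
    have h1 : betaOp n (fun t => r.eval t) y = betaOp n (fun t => q.eval t) (1 - y) := by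
      rw [show (fun t => r.eval t) = fun t => q.eval (1 - t) from funext hr]
      exact betaOp_comp_one_sub n (fun t => q.eval t) y ⟨hy0, hy1⟩
    rw [hp y ⟨hy0.le, hy1.le⟩, h1, hq (1 - y) ⟨by linarith, by linarith⟩]
    rw [bernsteinBasis, bernsteinBasis, Nat.choose_symm hi, Nat.sub_sub_self hi,
      sub_sub_cancel]
    ring
  have hroots : Tmap n p - Tmap n r = 0 := by
    refine Polynomial.eq_zero_of_infinite_isRoot _ ?_
    refine Set.Infinite.mono (fun y hy => ?_) (Set.Ioo_infinite (by norm_num : (0:ℝ) < 1))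
    simp only [Set.mem_setOf_eq, IsRoot, eval_sub, sub_eq_zero]
    exact hfun y hy
  have hpr : p = r := Tmap_inj n hn p r (sub_eq_zero.mp hroots)
  intro x _
  rw [hpr, hr x]
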